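/- Fix D > 0 and suppose n^M = 15/16 and c = 0, so the travelling-wave fast subsystem is E'(z) = w, D·w'(z) = E − (9/8)(E² − E³/4). Then there exists a double heteroclinic connection between the saddles (0,0) and (8/3,0): there are two nonconstant solutions γ₊, γ₋ : ℝ → ℝ² of this system such that γ₊(z) → (0,0) as z → −∞ and γ₊(z) → (8/3,0) as z → +∞, while γ₋(z) → (8/3,0) as z → −∞ and γ₋(z) → (0,0) as z → +∞. -/

import Mathlib

open Filter Topology

/-- For `n^M = 15/16` and `c = 0` the travelling-wave fast subsystem
`E' = w`, `D w' = E - (9/8)(E² - E³/4)` has a double heteroclinic connection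
between the saddles `(0,0)` and `(8/3,0)`: there are nonconstant solutions
`γ₊` from `(0,0)` to `(8/3,0)` and `γ₋` from `(8/3,0)` to `(0,0)`. -/
theorem karma_double_heteroclinic (D : ℝ) (hD : 0 < D) :
    ∃ γp γm : ℝ → ℝ × ℝ,
      (∀ z : ℝ,
        HasDerivAt (fun z' => (γp z').1) ((γp z).2) z ∧
        HasDerivAt (fun z' => (γp z').2)
          (((γp z).1 - (9 / 8) * ((γp z).1 ^ 2 - (γp z).1 ^ 3 / 4)) / D) z) ∧
      (∀ z : ℝ,
        HasDerivAt (fun z' => (γm z').1) ((γm z).2) z ∧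
        HasDerivAt (fun z' => (γm z').2)
          (((γm z).1 - (9 / 8) * ((γm z).1 ^ 2 - (γm z).1 ^ 3 / 4)) / D) z) ∧
      (∃ z₁ z₂ : ℝ, γp z₁ ≠ γp z₂) ∧ (∃ z₁ z₂ : ℝ, γm z₁ ≠ γm z₂) ∧
      Tendsto γp atBot (𝓝 (0, 0)) ∧ Tendsto γp atTop (𝓝 (8 / 3, 0)) ∧
      Tendsto γm atBot (𝓝 (8 / 3, 0)) ∧ Tendsto γm atTop (𝓝 (0, 0)) := by
  set k : ℝ := (Real.sqrt D)⁻¹ with hk_def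
  have hsq : 0 < Real.sqrt D := Real.sqrt_pos.mpr hD
  have hk : 0 < k := inv_pos.mpr hsq
  have hk2 : k * k = D⁻¹ := by
    rw [hk_def, ← mul_inv, Real.mul_self_sqrt hD.le]
  set σ : ℝ → ℝ := fun z => (1 + Real.exp (-(k * z)))⁻¹ with hσ_def
  have hpos : ∀ z : ℝ, (0:ℝ) < 1 + Real.exp (-(k * z)) := fun z => by positivity
  have hσ' : ∀ z : ℝ, HasDerivAt σ (k * σ z * (1 - σ z)) z := by
    intro z
    have h1 : HasDerivAt (fun z : ℝ => -(k * z)) (-k) z := by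
      exact (((hasDerivAt_id z).const_mul k).neg).congr_deriv (by ring)
    have h2 : HasDerivAt (fun z : ℝ => 1 + Real.exp (-(k * z)))
        (Real.exp (-(k * z)) * -k) z := (h1.exp).const_add 1
    have h3 := h2.inv (hpos z).ne'
    refine h3.congr_deriv ?_
    have hd := (hpos z).ne'
    simp only [hσ_def]
    field_simp
    ring
  -- derivative facts for the basic front
  have hF1 : ∀ z : ℝ, HasDerivAt (fun z' => (8/3 : ℝ) * σ z')
      ((8/3) * (k * σ z * (1 - σ z))) z := fun z => (hσ' z).const_mul _
  have hF2 : ∀ z : ℝ, HasDerivAt (fun z' => (8/3 : ℝ) * (k * σ z' * (1 - σ z')))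
      (((8/3) * σ z - (9/8) * (((8/3) * σ z) ^ 2 - ((8/3) * σ z) ^ 3 / 4)) / D) z := by
    intro z
    have h := (((hσ' z).const_mul k).mul ((hasDerivAt_const z (1:ℝ)).sub (hσ' z))).const_mul
      (8/3 : ℝ)
    simp only [Pi.sub_apply, Pi.mul_apply] at h
    refine h.congr_deriv ?_
    rw [div_eq_mul_inv _ D, ← hk2]
    ring
  have hneg : ∀ z : ℝ, HasDerivAt (fun z' : ℝ => -z') (-1 : ℝ) z := fun z => by
    exact (hasDerivAt_id z).neg
  -- limit facts
  have hkz_top : Tendsto (fun z : ℝ => -(k * z)) atTop atBot := by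
    apply tendsto_neg_atTop_atBot.comp
    exact (tendsto_const_mul_atTop_of_pos hk).mpr tendsto_id
  have hkz_bot : Tendsto (fun z : ℝ => -(k * z)) atBot atTop := by
    apply tendsto_neg_atBot_atTop.comp
    exact (tendsto_const_mul_atBot_of_pos hk).mpr tendsto_id
  have hσtop : Tendsto σ atTop (𝓝 1) := by
    have he : Tendsto (fun z : ℝ => Real.exp (-(k * z))) atTop (𝓝 0) :=
      Real.tendsto_exp_atBot.comp hkz_top
    have h : Tendsto (fun z : ℝ => (1 + Real.exp (-(k * z)))⁻¹) atTop (𝓝 ((1 + 0)⁻¹)) :=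
      (Filter.Tendsto.add tendsto_const_nhds he).inv₀ (by norm_num)
    rw [hσ_def]
    simpa using h
  have hσbot : Tendsto σ atBot (𝓝 0) := by
    have he : Tendsto (fun z : ℝ => Real.exp (-(k * z))) atBot atTop :=
      Real.tendsto_exp_atTop.comp hkz_bot
    have h1 : Tendsto (fun z : ℝ => 1 + Real.exp (-(k * z))) atBot atTop :=
      tendsto_atTop_add_const_left _ 1 he
    rw [hσ_def]
    exact tendsto_inv_atTop_zero.comp h1
  have hnegtop : Tendsto (fun z : ℝ => -z) atTop atBot := tendsto_neg_atTop_atBot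
  have hnegbot : Tendsto (fun z : ℝ => -z) atBot atTop := tendsto_neg_atBot_atTop
  -- injectivity of σ
  have hσinj : Function.Injective σ := by
    intro a b hab
    have h3 : (1 : ℝ) + Real.exp (-(k * a)) = 1 + Real.exp (-(k * b)) :=
      inv_injective hab
    have h4 : Real.exp (-(k * a)) = Real.exp (-(k * b)) := by linarith
    have h5 : -(k * a) = -(k * b) := Real.exp_injective h4
    have h6 : k * a = k * b := by linarith
    exact mul_left_cancel₀ hk.ne' h6
  refine ⟨fun z => ((8/3) * σ z, (8/3) * (k * σ z * (1 - σ z))),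
    fun z => ((8/3) * σ (-z), -((8/3) * (k * σ (-z) * (1 - σ (-z))))),
    ?_, ?_, ?_, ?_, ?_, ?_, ?_, ?_⟩
  · intro z
    exact ⟨hF1 z, hF2 z⟩
  · intro z
    constructor
    · have h := (hF1 (-z)).comp z (hneg z)
      show HasDerivAt (fun z' => (8/3 : ℝ) * σ (-z'))
        (-((8/3) * (k * σ (-z) * (1 - σ (-z))))) z
      have heq : -((8/3 : ℝ) * (k * σ (-z) * (1 - σ (-z))))
          = (8/3) * (k * σ (-z) * (1 - σ (-z))) * (-1) := by ring
      rw [heq]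
      exact h
    · have h := ((hF2 (-z)).comp z (hneg z)).neg
      show HasDerivAt (fun z' => -((8/3 : ℝ) * (k * σ (-z') * (1 - σ (-z')))))
        (((8/3) * σ (-z) - (9/8) * (((8/3) * σ (-z)) ^ 2
          - ((8/3) * σ (-z)) ^ 3 / 4)) / D) z
      have heq : ((8/3 : ℝ) * σ (-z) - (9/8) * (((8/3) * σ (-z)) ^ 2
            - ((8/3) * σ (-z)) ^ 3 / 4)) / D
          = -(((8/3) * σ (-z) - (9/8) * (((8/3) * σ (-z)) ^ 2
            - ((8/3) * σ (-z)) ^ 3 / 4)) / D * (-1)) := by ring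
      rw [heq]
      exact h
  · refine ⟨0, 1, fun h => ?_⟩
    have h1 : (8/3 : ℝ) * σ 0 = (8/3) * σ 1 := congrArg Prod.fst h
    have h2 : σ 0 = σ 1 := mul_left_cancel₀ (by norm_num) h1
    have := hσinj h2
    norm_num at this
  · refine ⟨0, 1, fun h => ?_⟩
    have h1 : (8/3 : ℝ) * σ (-0) = (8/3) * σ (-1) := congrArg Prod.fst h
    have h2 : σ (-0) = σ (-1) := mul_left_cancel₀ (by norm_num) h1
    have := hσinj h2
    norm_num at this
  · refine Tendsto.prodMk_nhds ?_ ?_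
    · simpa using hσbot.const_mul (8/3 : ℝ)
    · have := ((hσbot.const_mul k).mul ((tendsto_const_nhds (x := (1:ℝ))).sub hσbot)).const_mul (8/3 : ℝ)
      simpa using this
  · refine Tendsto.prodMk_nhds ?_ ?_
    · simpa using hσtop.const_mul (8/3 : ℝ)
    · have := ((hσtop.const_mul k).mul ((tendsto_const_nhds (x := (1:ℝ))).sub hσtop)).const_mul (8/3 : ℝ)
      simpa using this
  · refine Tendsto.prodMk_nhds ?_ ?_
    · have := (hσtop.comp hnegbot).const_mul (8/3 : ℝ)
      simpa [Function.comp] using this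
    · have := ((((hσtop.comp hnegbot).const_mul k).mul
        ((tendsto_const_nhds (x := (1:ℝ))).sub (hσtop.comp hnegbot))).const_mul (8/3 : ℝ)).neg
      simpa [Function.comp] using this
  · refine Tendsto.prodMk_nhds ?_ ?_
    · have := (hσbot.comp hnegtop).const_mul (8/3 : ℝ)
      simpa [Function.comp] using this
    · have := ((((hσbot.comp hnegtop).const_mul k).mul
        ((tendsto_const_nhds (x := (1:ℝ))).sub (hσbot.comp hnegtop))).const_mul (8/3 : ℝ)).neg
      simpa [Function.comp] using this
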